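/- arXiv:2404.03500 — 4 statements merged into one kernel-verified Lean document; each statement's English description precedes it below -/
import Mathlib

section
/- Let A be an n×r real matrix and B an r×m real matrix. If all entries and all 2×2 minors of A and of B are non-negative (i.e., A and B are TP₂), then all entries and all 2×2 minors of the product AB are non-negative. -/
/-- A real matrix is TP₂ if all entries and all 2×2 minors are non-negative. -/
def IsTP2 {n m : ℕ} (A : Matrix (Fin n) (Fin m) ℝ) : Prop :=
  (∀ i j, 0 ≤ A i j) ∧
  ∀ i₁ i₂ j₁ j₂, i₁ < i₂ → j₁ < j₂ →
    0 ≤ A i₁ j₁ * A i₂ j₂ - A i₁ j₂ * A i₂ j₁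

/-- Splitting a double sum into pairs `k < l` (combined with the swapped term)
plus the diagonal. -/
lemma double_sum_split {r : ℕ} (f : Fin r → Fin r → ℝ) :
    ∑ k, ∑ l, f k l =
      (∑ p ∈ (Finset.univ ×ˢ Finset.univ).filter
          (fun p : Fin r × Fin r => p.1 < p.2), (f p.1 p.2 + f p.2 p.1)) +
      ∑ k, f k k := by
  classical
  rw [← Finset.sum_product']
  have h1 : (Finset.univ ×ˢ Finset.univ : Finset (Fin r × Fin r)) =
      ((Finset.univ ×ˢ Finset.univ).filter (fun p : Fin r × Fin r => p.1 < p.2)) ∪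
      (((Finset.univ ×ˢ Finset.univ).filter (fun p : Fin r × Fin r => p.2 < p.1)) ∪
       ((Finset.univ ×ˢ Finset.univ).filter (fun p : Fin r × Fin r => p.1 = p.2))) := by
    ext p
    simp only [Finset.mem_union, Finset.mem_filter, Finset.mem_product,
      Finset.mem_univ, true_and]
    rcases lt_trichotomy p.1 p.2 with h | h | h <;> simp [h]
  conv_lhs => rw [h1]
  rw [Finset.sum_union, Finset.sum_union]
  · have h2 : ∑ p ∈ (Finset.univ ×ˢ Finset.univ).filter
        (fun p : Fin r × Fin r => p.2 < p.1), f p.1 p.2 =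
        ∑ p ∈ (Finset.univ ×ˢ Finset.univ).filter
        (fun p : Fin r × Fin r => p.1 < p.2), f p.2 p.1 := by
      apply Finset.sum_nbij' (fun p => Prod.swap p) (fun p => Prod.swap p) <;>
        simp [Finset.mem_filter]
    have h3 : ∑ p ∈ (Finset.univ ×ˢ Finset.univ).filter
        (fun p : Fin r × Fin r => p.1 = p.2), f p.1 p.2 = ∑ k, f k k := by
      apply Finset.sum_nbij' (fun p => p.1) (fun k => (k, k)) <;>
        simp +contextual [Finset.mem_filter, eq_comm]
    rw [h2, h3, Finset.sum_add_distrib]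
    ring
  · rw [Finset.disjoint_filter]
    rintro ⟨a, b⟩ _ h1 h2
    simp only at h1 h2
    omega
  · rw [Finset.disjoint_union_right]
    constructor <;>
    · rw [Finset.disjoint_filter]
      rintro ⟨a, b⟩ _ h1 h2
      simp only at h1 h2
      omega

theorem tp2_mul {n r m : ℕ} (A : Matrix (Fin n) (Fin r) ℝ)
    (B : Matrix (Fin r) (Fin m) ℝ) (hA : IsTP2 A) (hB : IsTP2 B) :
    IsTP2 (A * B) := by
  obtain ⟨hA0, hA2⟩ := hA
  obtain ⟨hB0, hB2⟩ := hB
  constructor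
  · intro i j
    rw [Matrix.mul_apply]
    exact Finset.sum_nonneg fun k _ => mul_nonneg (hA0 i k) (hB0 k j)
  · intro i₁ i₂ j₁ j₂ hi hj
    have key : (A * B) i₁ j₁ * (A * B) i₂ j₂ - (A * B) i₁ j₂ * (A * B) i₂ j₁
        = ∑ p ∈ (Finset.univ ×ˢ Finset.univ).filter
            (fun p : Fin r × Fin r => p.1 < p.2),
            (A i₁ p.1 * A i₂ p.2 - A i₁ p.2 * A i₂ p.1) *
            (B p.1 j₁ * B p.2 j₂ - B p.1 j₂ * B p.2 j₁) := by
      have e : (A * B) i₁ j₁ * (A * B) i₂ j₂ - (A * B) i₁ j₂ * (A * B) i₂ j₁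
          = ∑ k, ∑ l, (A i₁ k * B k j₁ * (A i₂ l * B l j₂)
              - A i₁ k * B k j₂ * (A i₂ l * B l j₁)) := by
        simp only [Matrix.mul_apply, Finset.sum_mul_sum, Finset.sum_sub_distrib]
      rw [e, double_sum_split]
      have hd : ∑ k : Fin r, (A i₁ k * B k j₁ * (A i₂ k * B k j₂)
          - A i₁ k * B k j₂ * (A i₂ k * B k j₁)) = 0 := by
        apply Finset.sum_eq_zero; intro k _; ring
      rw [hd, add_zero]
      apply Finset.sum_congr rfl
      intro p _
      ring
    rw [key]
    apply Finset.sum_nonneg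
    intro p hp
    simp only [Finset.mem_filter] at hp
    exact mul_nonneg (hA2 _ _ _ _ hi hp.2) (hB2 _ _ _ _ hp.2 hj)
end

section
/- Let A be an n×m real matrix with strictly positive entries. Then every 2×2 minor of A is non-negative if and only if every 2×2 minor formed from two consecutive rows and two consecutive columns is non-negative. -/
lemma fin_mono_of_step {m : ℕ} (f : Fin m → ℝ)
    (h : ∀ k (hk : k + 1 < m), f ⟨k, Nat.lt_of_succ_lt hk⟩ ≤ f ⟨k + 1, hk⟩) :
    Monotone f := by
  have step : ∀ (k : ℕ) (a b : Fin m), (b : ℕ) = (a : ℕ) + k → f a ≤ f b := by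
    intro k
    induction k with
    | zero => intro a b hb; have : a = b := Fin.ext (by omega); rw [this]
    | succ k ih =>
      intro a b hb
      have hk : (a : ℕ) + k + 1 < m := by omega
      have h1 : f a ≤ f ⟨(a : ℕ) + k, Nat.lt_of_succ_lt hk⟩ := ih a _ rfl
      have h2 : f ⟨(a : ℕ) + k, Nat.lt_of_succ_lt hk⟩ ≤ f ⟨(a : ℕ) + k + 1, hk⟩ :=
        h _ hk
      have : b = ⟨(a : ℕ) + k + 1, hk⟩ := Fin.ext (by simp; omega)
      rw [this]; exact h1.trans h2
  intro a b hab
  exact step ((b : ℕ) - (a : ℕ)) a b (by omega)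

theorem tp2_iff_consecutive_minors {n m : ℕ} (A : Matrix (Fin n) (Fin m) ℝ)
    (hpos : ∀ i j, 0 < A i j) :
    (∀ i₁ i₂ : Fin n, ∀ j₁ j₂ : Fin m, i₁ < i₂ → j₁ < j₂ →
        0 ≤ A i₁ j₁ * A i₂ j₂ - A i₁ j₂ * A i₂ j₁) ↔
    (∀ (i j : ℕ) (hi : i + 1 < n) (hj : j + 1 < m),
        0 ≤ A ⟨i, by omega⟩ ⟨j, by omega⟩ * A ⟨i + 1, hi⟩ ⟨j + 1, hj⟩ -
          A ⟨i, by omega⟩ ⟨j + 1, hj⟩ * A ⟨i + 1, hi⟩ ⟨j, by omega⟩) := by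
  constructor
  · intro h i j hi hj
    exact h _ _ _ _ (by simp [Fin.lt_def]) (by simp [Fin.lt_def])
  · intro h i₁ i₂ j₁ j₂ hii hjj
    -- Step 1: consecutive rows, arbitrary columns
    have key1 : ∀ (i : ℕ) (hi : i + 1 < n), ∀ p q : Fin m, p ≤ q →
        A ⟨i, Nat.lt_of_succ_lt hi⟩ q * A ⟨i + 1, hi⟩ p ≤
          A ⟨i, Nat.lt_of_succ_lt hi⟩ p * A ⟨i + 1, hi⟩ q := by
      intro i hi p q hpq
      have mono : Monotone (fun j : Fin m => A ⟨i + 1, hi⟩ j / A ⟨i, Nat.lt_of_succ_lt hi⟩ j) := by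
        apply fin_mono_of_step
        intro k hk
        have := h i k hi hk
        rw [div_le_div_iff₀ (hpos _ _) (hpos _ _)]
        nlinarith [this]
      have := mono hpq
      rw [div_le_div_iff₀ (hpos _ _) (hpos _ _)] at this
      nlinarith [this]
    -- Step 2: arbitrary rows, fixed columns j₁ ≤ j₂
    have mono2 : Monotone (fun i : Fin n => A i j₂ / A i j₁) := by
      apply fin_mono_of_step
      intro k hk
      have := key1 k hk j₁ j₂ hjj.le
      rw [div_le_div_iff₀ (hpos _ _) (hpos _ _)]
      nlinarith [this]
    have := mono2 hii.le
    rw [div_le_div_iff₀ (hpos _ _) (hpos _ _)] at this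
    nlinarith [this]
end

section
/- For integers d ≥ 1 and 0 ≤ i, j ≤ d−1, let A(d,i,j) be the number of permutations σ of {1,…,d} with exactly i descents and σ(d) = d−j. Then A(d,i,j) = 0 if and only if (i = 0 and j ≠ 0) or (i = d−1 and j ≠ d−1). -/
/-- The number of descents of a permutation of `Fin d`:
indices `k` with `σ(k) > σ(k+1)`. -/
def descentCount {d : ℕ} (σ : Equiv.Perm (Fin d)) : ℕ :=
  (Finset.univ.filter
    (fun k : Fin d => ∃ l : Fin d, (l : ℕ) = (k : ℕ) + 1 ∧ σ l < σ k)).card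

/-- `A d i j` is the number of permutations `σ` of `{1,…,d}` (modeled on `Fin d`
with values shifted down by one) with exactly `i` descents and `σ(d) = d - j`,
i.e. the last value (0-based) satisfies `σ(last) + j = d - 1`.  In particular
`A d i j = 0` whenever `i ≥ d` or `j ≥ d`. -/
def permCount (d i j : ℕ) : ℕ :=
  (Finset.univ.filter (fun σ : Equiv.Perm (Fin d) =>
    descentCount σ = i ∧
    ∃ k : Fin d, (k : ℕ) = d - 1 ∧ (σ k : ℕ) + j = d - 1)).card

lemma cardFilterIco (d a b : ℕ) (hb : b ≤ d) :
    (Finset.univ.filter (fun k : Fin d => a ≤ (k:ℕ) ∧ (k:ℕ) < b)).card = b - a := by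
  rw [← Nat.card_Ico a b]
  refine Finset.card_nbij (fun k => (k:ℕ)) ?_ ?_ ?_
  · intro k hk; simp only [Finset.mem_coe, Finset.mem_filter, Finset.mem_univ, true_and] at hk
    simp only [Finset.mem_coe, Finset.mem_Ico]; omega
  · intro k _ l _ h; exact Fin.ext h
  · intro m hm
    simp only [Finset.coe_Ico, Set.mem_Ico] at hm
    exact ⟨⟨m, by omega⟩, by simp; omega⟩

lemma strictMono_perm_eq {d : ℕ} (σ : Equiv.Perm (Fin d)) (h : StrictMono σ) (k : Fin d) :
    σ k = k := by
  have := Subsingleton.elim (StrictMono.orderIsoOfSurjective σ h σ.surjective) (OrderIso.refl _)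
  have h2 := congrFun (congrArg (fun (e : Fin d ≃o Fin d) => (e : Fin d → Fin d)) this) k
  simpa [StrictMono.coe_orderIsoOfSurjective] using h2

/-- A permutation with no descents is the identity. -/
lemma eq_id_of_descentCount_zero {d : ℕ} (σ : Equiv.Perm (Fin d))
    (h : descentCount σ = 0) (k : Fin d) : σ k = k := by
  rw [descentCount, Finset.card_eq_zero, Finset.filter_eq_empty_iff] at h
  cases d with
  | zero => exact absurd k.isLt (by omega)
  | succ n =>
    refine strictMono_perm_eq σ ?_ k
    rw [Fin.strictMono_iff_lt_succ]
    intro m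
    have h1 := h (Finset.mem_univ (Fin.castSucc m))
    have h2 : ¬ (σ m.succ < σ (Fin.castSucc m)) := by
      intro hlt
      exact h1 ⟨m.succ, by simp, hlt⟩
    have hne : σ (Fin.castSucc m) ≠ σ m.succ :=
      fun he => absurd (σ.injective he) (Fin.ne_of_lt (Fin.castSucc_lt_succ : Fin.castSucc m < m.succ))
    exact lt_of_le_of_ne (not_lt.mp h2) hne

/-- A permutation with all d-1 descents is the reversal. -/
lemma eq_rev_of_descentCount {d : ℕ} (σ : Equiv.Perm (Fin d))
    (h : descentCount σ = d - 1) (k : Fin d) : σ k = Fin.rev k := by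
  rw [descentCount] at h
  set S := (Finset.univ.filter
    (fun k : Fin d => ∃ l : Fin d, (l : ℕ) = (k : ℕ) + 1 ∧ σ l < σ k)) with hS
  set T := (Finset.univ.filter (fun k : Fin d => 0 ≤ (k:ℕ) ∧ (k:ℕ) < d - 1)) with hT
  have hTcard : T.card = d - 1 := by
    rw [hT, cardFilterIco d 0 (d-1) (by omega)]; omega
  have hsub : S ⊆ T := by
    intro x hx
    rw [hS, Finset.mem_filter] at hx
    obtain ⟨-, l, hl, -⟩ := hx
    rw [hT, Finset.mem_filter]
    have := l.isLt
    exact ⟨Finset.mem_univ _, by omega, by omega⟩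
  have hST : S = T := Finset.eq_of_subset_of_card_le hsub (by omega)
  cases d with
  | zero => exact absurd k.isLt (by omega)
  | succ n =>
    have hdesc : ∀ m : Fin n, σ m.succ < σ (Fin.castSucc m) := by
      intro m
      have hmem : Fin.castSucc m ∈ T := by
        rw [hT, Finset.mem_filter]
        have := m.isLt
        exact ⟨Finset.mem_univ _, by omega, by simp only [Fin.coe_castSucc]; omega⟩
      rw [← hST, hS, Finset.mem_filter] at hmem
      obtain ⟨-, l, hl, hlt⟩ := hmem
      have : l = m.succ := Fin.ext (by simpa using hl)
      rwa [this] at hlt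
    have hmono : StrictMono (σ.trans Fin.revPerm) := by
      rw [Fin.strictMono_iff_lt_succ]
      intro m
      exact Fin.rev_lt_rev.mpr (hdesc m)
    have h2 := strictMono_perm_eq _ hmono k
    have h3 : Fin.rev (σ k) = k := h2
    have := congrArg Fin.rev h3
    rwa [Fin.rev_rev] at this

lemma permCount_pos₁ (d i j : ℕ) (hd : 1 ≤ d) (hi : i ≤ d - 1) (hji : j ≤ i)
    (hlast : i < d - 1 ∨ j = d - 1) : permCount d i j ≠ 0 := by
  set g : ℕ → ℕ := fun k => if k < j then d - 1 - k else if k ≤ i then i - k else k - j with hg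
  have hbd : ∀ k, k < d → g k < d := by
    intro k hk; simp only [hg]; split_ifs <;> omega
  set f : Fin d → Fin d := fun k => ⟨g k, hbd k k.isLt⟩ with hf
  have hinj : Function.Injective f := by
    intro a b hab
    have ha := a.isLt; have hb := b.isLt
    have h1 : g a = g b := congrArg Fin.val hab
    simp only [hg] at h1
    have : (a : ℕ) = (b : ℕ) := by split_ifs at h1 <;> omega
    exact Fin.ext this
  set σ : Equiv.Perm (Fin d) := Equiv.ofBijective f (Finite.injective_iff_bijective.mp hinj)
    with hσ
  have happ : ∀ k : Fin d, (σ k : ℕ) = g k := fun k => rfl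
  have hdesc : descentCount σ = i := by
    rw [descentCount]
    have hfe : (Finset.univ.filter
        (fun k : Fin d => ∃ l : Fin d, (l : ℕ) = (k : ℕ) + 1 ∧ σ l < σ k)) =
        (Finset.univ.filter (fun k : Fin d => 0 ≤ (k:ℕ) ∧ (k:ℕ) < i)) := by
      ext k
      simp only [Finset.mem_filter, Finset.mem_univ, true_and]
      constructor
      · rintro ⟨l, hl, hlt⟩
        have hlt' : g l < g k := by
          rw [← happ, ← happ]; exact hlt
        have hld := l.isLt; have hkd := k.isLt
        simp only [hg] at hlt'
        rw [hl] at hlt'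
        constructor
        · omega
        · split_ifs at hlt' <;> omega
      · rintro ⟨-, hk⟩
        have hkd : (k : ℕ) + 1 < d := by omega
        refine ⟨⟨(k : ℕ) + 1, hkd⟩, rfl, ?_⟩
        rw [Fin.lt_def, happ, happ]
        simp only [hg]
        split_ifs <;> omega
    rw [hfe, cardFilterIco d 0 i (by omega)]; omega
  have hlastv : ∃ k : Fin d, (k : ℕ) = d - 1 ∧ (σ k : ℕ) + j = d - 1 := by
    refine ⟨⟨d - 1, by omega⟩, rfl, ?_⟩
    rw [happ]; simp only [hg]
    split_ifs <;> omega
  rw [permCount]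
  exact Finset.card_ne_zero_of_mem (Finset.mem_filter.mpr ⟨Finset.mem_univ σ, hdesc, hlastv⟩)

lemma permCount_pos₂ (d i j : ℕ) (hd : 1 ≤ d) (hj : j ≤ d - 1) (hij : i ≤ j)
    (hfirst : 1 ≤ i ∨ j = 0) : permCount d i j ≠ 0 := by
  set g : ℕ → ℕ := fun k =>
    if k < d - 1 - j then k else if k ≤ d - 1 - i then i + k else (d - 1) - (k - (d - 1 - j))
    with hg
  have hbd : ∀ k, k < d → g k < d := by
    intro k hk; simp only [hg]; split_ifs <;> omega
  set f : Fin d → Fin d := fun k => ⟨g k, hbd k k.isLt⟩ with hf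
  have hinj : Function.Injective f := by
    intro a b hab
    have ha := a.isLt; have hb := b.isLt
    have h1 : g a = g b := congrArg Fin.val hab
    simp only [hg] at h1
    have : (a : ℕ) = (b : ℕ) := by split_ifs at h1 <;> omega
    exact Fin.ext this
  set σ : Equiv.Perm (Fin d) := Equiv.ofBijective f (Finite.injective_iff_bijective.mp hinj)
    with hσ
  have happ : ∀ k : Fin d, (σ k : ℕ) = g k := fun k => rfl
  have hdesc : descentCount σ = i := by
    rw [descentCount]
    have hfe : (Finset.univ.filter
        (fun k : Fin d => ∃ l : Fin d, (l : ℕ) = (k : ℕ) + 1 ∧ σ l < σ k)) =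
        (Finset.univ.filter (fun k : Fin d => d - 1 - i ≤ (k:ℕ) ∧ (k:ℕ) < d - 1)) := by
      ext k
      simp only [Finset.mem_filter, Finset.mem_univ, true_and]
      constructor
      · rintro ⟨l, hl, hlt⟩
        have hlt' : g l < g k := by
          rw [← happ, ← happ]; exact hlt
        have hld := l.isLt; have hkd := k.isLt
        simp only [hg] at hlt'
        rw [hl] at hlt'
        constructor
        · split_ifs at hlt' <;> omega
        · omega
      · rintro ⟨hk1, hk2⟩
        have hkd : (k : ℕ) + 1 < d := by omega
        refine ⟨⟨(k : ℕ) + 1, hkd⟩, rfl, ?_⟩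
        rw [Fin.lt_def, happ, happ]
        simp only [hg]
        split_ifs <;> omega
    rw [hfe, cardFilterIco d (d - 1 - i) (d - 1) (by omega)]; omega
  have hlastv : ∃ k : Fin d, (k : ℕ) = d - 1 ∧ (σ k : ℕ) + j = d - 1 := by
    refine ⟨⟨d - 1, by omega⟩, rfl, ?_⟩
    rw [happ]; simp only [hg]
    split_ifs <;> omega
  rw [permCount]
  exact Finset.card_ne_zero_of_mem (Finset.mem_filter.mpr ⟨Finset.mem_univ σ, hdesc, hlastv⟩)

theorem permCount_eq_zero_iff (d i j : ℕ) (hd : 1 ≤ d)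
    (hi : i ≤ d - 1) (hj : j ≤ d - 1) :
    permCount d i j = 0 ↔ (i = 0 ∧ j ≠ 0) ∨ (i = d - 1 ∧ j ≠ d - 1) := by
  constructor
  · intro h0
    by_contra hc
    push_neg at hc
    obtain ⟨hc1, hc2⟩ := hc
    rcases le_or_gt j i with hji | hij
    · exact permCount_pos₁ d i j hd hi hji (by omega) h0
    · exact permCount_pos₂ d i j hd hj (by omega) (by omega) h0
  · rintro (⟨hi0, hj0⟩ | ⟨hi1, hj1⟩)
    · subst hi0
      rw [permCount, Finset.card_eq_zero, Finset.filter_eq_empty_iff]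
      rintro σ - ⟨hdesc, k, hk, hv⟩
      have := eq_id_of_descentCount_zero σ hdesc k
      rw [this] at hv
      omega
    · subst hi1
      rw [permCount, Finset.card_eq_zero, Finset.filter_eq_empty_iff]
      rintro σ - ⟨hdesc, k, hk, hv⟩
      have := eq_rev_of_descentCount σ hdesc k
      rw [this] at hv
      have hrv : (Fin.rev k : ℕ) = d - 1 - (k : ℕ) := by rw [Fin.val_rev]; omega
      rw [hrv] at hv
      have := k.isLt
      omega
end

section
/- Let P(d) be the set of sequences ((a₁,u₁),…,(a_d,u_d)) in ({E,N}×ℕ)^d satisfying: (L1) a₁ = E and u₁ = 1; (L2) if a_i = a_{i+1} then u_i ≥ u_{i+1}; (L3) if a_i ≠ a_{i+1} then u_i + u_{i+1} ≤ i+1. Then |P(d)| = d!. -/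
/-- A labeled northeast path of length `d`: each step is a direction
(`true` = E, `false` = N) together with a positive integer label, subject to:
(L1) the first step is `(E,1)`;
(L2) equal consecutive directions have weakly decreasing labels;
(L3) for differing consecutive directions at (1-based) positions `i, i+1`,
the two labels sum to at most `i+1`. -/
def IsLabeledPath {d : ℕ} (s : Fin d → Bool × ℕ) : Prop :=
  (∀ i : Fin d, 1 ≤ (s i).2) ∧
  (∀ h : 0 < d, (s ⟨0, h⟩).1 = true ∧ (s ⟨0, h⟩).2 = 1) ∧
  (∀ (i : ℕ) (h : i + 1 < d),
    ((s ⟨i, by omega⟩).1 = (s ⟨i + 1, h⟩).1 →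
      (s ⟨i + 1, h⟩).2 ≤ (s ⟨i, by omega⟩).2) ∧
    ((s ⟨i, by omega⟩).1 ≠ (s ⟨i + 1, h⟩).1 →
      (s ⟨i, by omega⟩).2 + (s ⟨i + 1, h⟩).2 ≤ i + 2))

namespace LPaux

lemma bound {d : ℕ} {s : Fin d → Bool × ℕ} (h : IsLabeledPath s) :
    ∀ n (hn : n < d), (s ⟨n, hn⟩).2 ≤ n + 1 := by
  intro n
  induction n with
  | zero => intro hn; exact le_of_eq ((h.2.1 hn).2)
  | succ n ih =>
    intro hn
    have hn' : n < d := by omega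
    have h3 := h.2.2 n hn
    by_cases hab : (s ⟨n, by omega⟩).1 = (s ⟨n+1, hn⟩).1
    · have h1 := h3.1 hab
      have h2 := ih hn'
      omega
    · have h1 := h3.2 hab
      have h2 := h.1 ⟨n, by omega⟩
      omega

lemma restrict {d : ℕ} {s : Fin (d+1) → Bool × ℕ} (h : IsLabeledPath s) :
    IsLabeledPath (fun i : Fin d => s ⟨i.1, by omega⟩) := by
  refine ⟨fun i => h.1 _, fun h0 => h.2.1 (by omega), fun i hi => h.2.2 i (by omega)⟩

def ext {d : ℕ} (t : Fin d → Bool × ℕ) (p : Bool × ℕ) : Fin (d+1) → Bool × ℕ :=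
  fun i => if h : i.1 < d then t ⟨i.1, h⟩ else p

lemma ext_lt {d : ℕ} (t : Fin d → Bool × ℕ) (p : Bool × ℕ) {n : ℕ} (hn : n < d)
    (hn' : n < d + 1) : ext t p ⟨n, hn'⟩ = t ⟨n, hn⟩ := dif_pos hn

lemma ext_last {d : ℕ} (t : Fin d → Bool × ℕ) (p : Bool × ℕ) {n : ℕ} (hn : ¬ n < d)
    (hn' : n < d + 1) : ext t p ⟨n, hn'⟩ = p := dif_neg hn

lemma ext_labeled {e : ℕ} {t : Fin (e+1) → Bool × ℕ} (ht : IsLabeledPath t)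
    {p : Bool × ℕ} (hp1 : 1 ≤ p.2)
    (hpe : p.1 = (t ⟨e, by omega⟩).1 → p.2 ≤ (t ⟨e, by omega⟩).2)
    (hpn : p.1 ≠ (t ⟨e, by omega⟩).1 → (t ⟨e, by omega⟩).2 + p.2 ≤ e + 2) :
    IsLabeledPath (ext t p) := by
  refine ⟨?_, ?_, ?_⟩
  · intro i
    by_cases h : i.1 < e + 1
    · rw [show i = ⟨i.1, i.2⟩ from rfl, ext_lt t p h]
      exact ht.1 _
    · rw [show i = ⟨i.1, i.2⟩ from rfl, ext_last t p h]
      exact hp1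
  · intro h0
    have h : (0:ℕ) < e + 1 := by omega
    rw [ext_lt t p h]
    exact ht.2.1 h
  · intro i hi
    by_cases h : i + 1 < e + 1
    · have h' : i < e + 1 := by omega
      rw [ext_lt t p h', ext_lt t p h]
      exact ht.2.2 i h
    · have hie : i = e := by omega
      simp only [hie] at *
      rw [ext_lt t p (show e < e + 1 by omega), ext_last t p h]
      exact ⟨fun hq => hpe hq.symm, fun hne => by have := hpn (Ne.symm hne); omega⟩

def encIdx {e : ℕ} (s : Fin (e+2) → Bool × ℕ) : ℕ :=
  if (s ⟨e+1, by omega⟩).1 = (s ⟨e, by omega⟩).1 then (s ⟨e+1, by omega⟩).2 - 1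
  else (s ⟨e, by omega⟩).2 + (s ⟨e+1, by omega⟩).2 - 1

lemma encIdx_lt {e : ℕ} {s : Fin (e+2) → Bool × ℕ} (hs : IsLabeledPath s) :
    encIdx s < e + 2 := by
  have hb := bound hs e (by omega)
  have h3 := hs.2.2 e (by omega)
  rw [encIdx]
  split
  · next heq => have := h3.1 heq.symm; omega
  · next hne => have := h3.2 (fun a => hne a.symm); omega

def enc (e : ℕ) (s : {s : Fin (e+2) → Bool × ℕ // IsLabeledPath s}) :
    {t : Fin (e+1) → Bool × ℕ // IsLabeledPath t} × Fin (e+2) :=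
  (⟨fun i : Fin (e+1) => s.1 ⟨i.1, by omega⟩, restrict s.2⟩, ⟨encIdx s.1, encIdx_lt s.2⟩)

lemma step_inj {a b b' : Bool} {w u u' : ℕ} (hu : 1 ≤ u) (hu' : 1 ≤ u')
    (hw : 1 ≤ w) (hle : b = a → u ≤ w) (hle' : b' = a → u' ≤ w)
    (h : (if b = a then u - 1 else w + u - 1) = (if b' = a then u' - 1 else w + u' - 1)) :
    b = b' ∧ u = u' := by
  by_cases c1 : b = a <;> by_cases c2 : b' = a
  · rw [if_pos c1, if_pos c2] at h
    exact ⟨c1.trans c2.symm, by omega⟩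
  · rw [if_pos c1, if_neg c2] at h
    have := hle c1
    omega
  · rw [if_neg c1, if_pos c2] at h
    have := hle' c2
    omega
  · rw [if_neg c1, if_neg c2] at h
    refine ⟨?_, by omega⟩
    revert c1 c2
    cases a <;> cases b <;> cases b' <;> simp

lemma enc_injective (e : ℕ) : Function.Injective (enc e) := by
  rintro ⟨s, hs⟩ ⟨s', hs'⟩ h
  simp only [enc, Prod.mk.injEq, Subtype.mk.injEq, Fin.mk.injEq] at h
  obtain ⟨h1, h2⟩ := h
  have hr : ∀ n (hn : n < e + 1), s ⟨n, by omega⟩ = s' ⟨n, by omega⟩ := by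
    intro n hn
    exact congrFun h1 ⟨n, hn⟩
  have he : s ⟨e, by omega⟩ = s' ⟨e, by omega⟩ := hr e (by omega)
  rw [encIdx, encIdx, he] at h2
  have hlast : s ⟨e+1, by omega⟩ = s' ⟨e+1, by omega⟩ := by
    have key := step_inj (hs.1 ⟨e+1, by omega⟩) (hs'.1 ⟨e+1, by omega⟩)
      (hs'.1 ⟨e, by omega⟩) ?_ ?_ h2
    · exact Prod.ext key.1 key.2
    · intro hc
      have h3 := hs.2.2 e (by omega)
      rw [he] at h3
      exact h3.1 hc.symm
    · intro hc
      have h3' := hs'.2.2 e (by omega)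
      exact h3'.1 hc.symm
  apply Subtype.ext
  funext i
  by_cases hin : i.1 < e + 1
  · have := hr i.1 hin
    simpa using this
  · have hie : i = ⟨e+1, by omega⟩ := by
      apply Fin.ext; simp only []; omega
    rw [hie]; exact hlast

lemma enc_surjective (e : ℕ) : Function.Surjective (enc e) := by
  rintro ⟨⟨t, ht⟩, k⟩
  have hu'1 : 1 ≤ (t ⟨e, by omega⟩).2 := ht.1 _
  have hub : (t ⟨e, by omega⟩).2 ≤ e + 1 := bound ht e (by omega)
  have hk := k.2
  by_cases hc : k.1 < (t ⟨e, by omega⟩).2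
  · refine ⟨⟨ext t ((t ⟨e, by omega⟩).1, k.1 + 1), ?_⟩, ?_⟩
    · refine ext_labeled ht (by simp) (fun _ => by simp; omega) (fun hne => ?_)
      exact absurd rfl hne
    · simp only [enc, Prod.mk.injEq, Subtype.mk.injEq]
      constructor
      · funext i
        rw [ext_lt _ _ i.2]
      · apply Fin.ext
        simp only [encIdx]
        rw [ext_last _ _ (show ¬ e+1 < e+1 by omega), ext_lt _ _ (show e < e+1 by omega)]
        rw [if_pos rfl]
        show (k : ℕ) + 1 - 1 = (k : ℕ)
        omega
  · refine ⟨⟨ext t (!(t ⟨e, by omega⟩).1, k.1 + 1 - (t ⟨e, by omega⟩).2), ?_⟩, ?_⟩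
    · refine ext_labeled ht (by simp; omega) (fun hq => ?_) (fun _ => by simp; omega)
      exact absurd hq (by simp)
    · simp only [enc, Prod.mk.injEq, Subtype.mk.injEq]
      constructor
      · funext i
        rw [ext_lt _ _ i.2]
      · apply Fin.ext
        simp only [encIdx]
        rw [ext_last _ _ (show ¬ e+1 < e+1 by omega), ext_lt _ _ (show e < e+1 by omega)]
        rw [if_neg (by simp)]
        show (t ⟨e, by omega⟩).2 + (↑k + 1 - (t ⟨e, by omega⟩).2) - 1 = ↑k
        omega

end LPaux

theorem card_labeledPaths (d : ℕ) (hd : 1 ≤ d) :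
    Nat.card {s : Fin d → Bool × ℕ // IsLabeledPath s} = d.factorial := by
  induction d with
  | zero => omega
  | succ e ih =>
    rcases Nat.eq_or_lt_of_le hd with h1 | h1
    · have he : e = 0 := by omega
      subst he
      have huniq : ∀ s : {s : Fin 1 → Bool × ℕ // IsLabeledPath s},
          s = ⟨fun _ => (true, 1), by
            exact ⟨fun i => le_refl _, fun h => ⟨rfl, rfl⟩, fun i hi => by omega⟩⟩ := by
        rintro ⟨s, hs⟩
        apply Subtype.ext
        funext i
        have h0 := hs.2.1 (by omega)
        have hi0 : i = ⟨0, by omega⟩ := by apply Fin.ext; omega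
        rw [hi0]
        exact Prod.ext h0.1 h0.2
      haveI : Unique {s : Fin 1 → Bool × ℕ // IsLabeledPath s} :=
        ⟨⟨_⟩, fun s => huniq s⟩
      simp [Nat.card_unique]
    · have he : 1 ≤ e := by omega
      obtain ⟨f, rfl⟩ : ∃ f, e = f + 1 := ⟨e - 1, by omega⟩
      have hcard := Nat.card_eq_of_bijective _
        ⟨LPaux.enc_injective f, LPaux.enc_surjective f⟩
      rw [hcard, Nat.card_prod, ih he, Nat.card_eq_fintype_card, Fintype.card_fin,
        Nat.factorial_succ (f+1)]
      ring
end
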